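/- Let n be a positive integer, μ ∈ ℂ^n a generic vector, and Δ a local derivation on the Witt algebra W_n = Der(ℂ[t_1^{±1},…,t_n^{±1}]) such that Δ(d_μ) = 0. Then for every α ∈ ℤ^n \ {0}, the element Δ(t^α d_μ) lies in the ℂ-linear span of the set {t^{kα} d_i : k ∈ ℤ, k ≥ 1, 1 ≤ i ≤ n}; in particular, all components of Δ(t^α d_μ) on t^{kα}𝔥 with k ≤ 0 vanish. -/

import Mathlib

open scoped BigOperators

noncomputable section

/-- The Laurent polynomial algebra `ℂ[t₁^{±1},…,tₙ^{±1}]`, realized as the group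
algebra of `ℤⁿ` over `ℂ`. -/
abbrev LaurentAlg (n : ℕ) : Type := AddMonoidAlgebra ℂ (Fin n → ℤ)

/-- The Witt algebra `Wₙ = Der(ℂ[t₁^{±1},…,tₙ^{±1}])`. -/
abbrev WittAlg (n : ℕ) : Type := Derivation ℂ (LaurentAlg n) (LaurentAlg n)

/-- Pairing `(μ, β) ↦ ∑ μᵢ βᵢ`. -/
def dotp {n : ℕ} (μ : Fin n → ℂ) (β : Fin n → ℤ) : ℂ := ∑ i, μ i * (β i : ℂ)

lemma dotp_add {n : ℕ} (μ : Fin n → ℂ) (β γ : Fin n → ℤ) :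
    dotp μ (β + γ) = dotp μ β + dotp μ γ := by
  simp [dotp, mul_add, Finset.sum_add_distrib]

lemma dotp_zero {n : ℕ} (μ : Fin n → ℂ) : dotp μ 0 = 0 := by simp [dotp]

/-- A vector `μ ∈ ℂⁿ` is generic if `μ·α ≠ 0` for all nonzero `α ∈ ℤⁿ`. -/
def IsGeneric {n : ℕ} (μ : Fin n → ℂ) : Prop :=
  ∀ α : Fin n → ℤ, α ≠ 0 → dotp μ α ≠ 0

/-- Underlying linear map of `t^α d_μ`. -/
def wdAux {n : ℕ} (μ : Fin n → ℂ) (α : Fin n → ℤ) : LaurentAlg n →ₗ[ℂ] LaurentAlg n :=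
  Finsupp.lsum ℂ (fun β => dotp μ β • AddMonoidAlgebra.lsingle (α + β)) ∘ₗ
    (AddMonoidAlgebra.coeffLinearEquiv ℂ).toLinearMap

lemma wdAux_single {n : ℕ} (μ : Fin n → ℂ) (α β : Fin n → ℤ) (c : ℂ) :
    wdAux μ α (AddMonoidAlgebra.single β c) = dotp μ β • AddMonoidAlgebra.single (α + β) c := by
  classical
  simp [wdAux, AddMonoidAlgebra.lsingle_apply, ← AddMonoidAlgebra.ofCoeff_single]

/-- The derivation `t^α d_μ` of the Laurent polynomial algebra, sending
`t^β ↦ (μ·β) t^{α+β}`.  In particular `wd μ 0 = d_μ` and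
`wd (Pi.single i 1) α = t^α dᵢ`. -/
def wd {n : ℕ} (μ : Fin n → ℂ) (α : Fin n → ℤ) : WittAlg n where
  toLinearMap := wdAux μ α
  map_one_eq_zero' := by
    rw [show (1 : LaurentAlg n) = AddMonoidAlgebra.single 0 1 from rfl, wdAux_single, dotp_zero,
      zero_smul]
  leibniz' := by
    intro a b
    show wdAux μ α (a * b) = a • wdAux μ α b + b • wdAux μ α a
    induction a using AddMonoidAlgebra.induction_linear with
    | zero => simp
    | add f g hf hg =>
        rw [add_mul, map_add, hf, hg, map_add]
        simp only [smul_eq_mul, add_mul, mul_add]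
        ring
    | single β c =>
      induction b using AddMonoidAlgebra.induction_linear with
      | zero => simp
      | add f g hf hg =>
          rw [mul_add, map_add, hf, hg, map_add]
          simp only [smul_eq_mul, add_mul, mul_add]
          ring
      | single γ d =>
          show wdAux μ α (AddMonoidAlgebra.single β c * AddMonoidAlgebra.single γ d) =
            AddMonoidAlgebra.single β c • wdAux μ α (AddMonoidAlgebra.single γ d)
            + AddMonoidAlgebra.single γ d • wdAux μ α (AddMonoidAlgebra.single β c)
          rw [AddMonoidAlgebra.single_mul_single, wdAux_single, wdAux_single, wdAux_single,
            smul_eq_mul, smul_eq_mul, mul_smul_comm, mul_smul_comm,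
            AddMonoidAlgebra.single_mul_single, AddMonoidAlgebra.single_mul_single,
            dotp_add, add_smul]
          rw [show β + (α + γ) = α + (β + γ) by abel, show γ + (α + β) = α + (β + γ) by abel,
            mul_comm d c, add_comm]

/-- A linear map `Δ` on a Lie algebra `L` is a local derivation if for each `x`
there is a Lie algebra derivation `Dₓ` with `Δ x = Dₓ x`. -/
def IsLocalDerivation {L : Type*} [LieRing L] [LieAlgebra ℂ L] (Δ : L →ₗ[ℂ] L) : Prop :=
  ∀ x : L, ∃ D : LieDerivation ℂ L L, Δ x = D x

end

noncomputable section

namespace WittAux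

open AddMonoidAlgebra

variable {n : ℕ}

/-- shorthand for the `i`-th standard basis vector of `ℤⁿ`. -/
abbrev ee (i : Fin n) : Fin n → ℤ := Pi.single i 1

lemma dotp_smul_left (a : ℂ) (u : Fin n → ℂ) (β : Fin n → ℤ) :
    dotp (a • u) β = a * dotp u β := by
  simp [dotp, Finset.mul_sum, mul_assoc]

lemma dotp_add_left (u v : Fin n → ℂ) (β : Fin n → ℤ) :
    dotp (u + v) β = dotp u β + dotp v β := by
  simp [dotp, add_mul, Finset.sum_add_distrib]

lemma dotp_sub_left (u v : Fin n → ℂ) (β : Fin n → ℤ) :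
    dotp (u - v) β = dotp u β - dotp v β := by
  simp [dotp, sub_mul, Finset.sum_sub_distrib]

lemma dotp_zero_left (β : Fin n → ℤ) : dotp (0 : Fin n → ℂ) β = 0 := by simp [dotp]

lemma dotp_sub (μ : Fin n → ℂ) (β γ : Fin n → ℤ) :
    dotp μ (β - γ) = dotp μ β - dotp μ γ := by
  simp [dotp, Finset.sum_sub_distrib, mul_sub]

lemma dotp_single_one (u : Fin n → ℂ) (i : Fin n) : dotp u (ee i) = u i := by
  simp [dotp, ee, Pi.single_apply]

lemma dotp_single_left (i : Fin n) (β : Fin n → ℤ) :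
    dotp (Pi.single i 1 : Fin n → ℂ) β = (β i : ℂ) := by
  simp [dotp, Pi.single_apply]

lemma dotp_zsmul (μ : Fin n → ℂ) (k : ℤ) (β : Fin n → ℤ) :
    dotp μ (k • β) = (k : ℂ) * dotp μ β := by
  rw [dotp, dotp, Finset.mul_sum]
  refine Finset.sum_congr rfl fun i _ => ?_
  have : (k • β) i = k * β i := rfl
  rw [this]; push_cast; ring

lemma eq_zero_of_forall_dotp (u : Fin n → ℂ) (h : ∀ β, dotp u β = 0) : u = 0 := by
  funext i
  have := h (ee i)
  rwa [dotp_single_one] at this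

lemma wd_single (u : Fin n → ℂ) (α β : Fin n → ℤ) (c : ℂ) :
    wd u α (AddMonoidAlgebra.single β c) = dotp u β • AddMonoidAlgebra.single (α + β) c :=
  wdAux_single u α β c

/-- Extensionality for derivations of the Laurent algebra: agree on all monomials. -/
lemma deriv_ext {D₁ D₂ : WittAlg n}
    (h : ∀ (β : Fin n → ℤ) (c : ℂ),
      D₁ (AddMonoidAlgebra.single β c) = D₂ (AddMonoidAlgebra.single β c)) : D₁ = D₂ := by
  apply Derivation.ext
  intro a
  induction a using AddMonoidAlgebra.induction_linear with
  | zero => simp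
  | add f g hf hg => rw [map_add, map_add, hf, hg]
  | single β c => exact h β c

lemma deriv_sum_apply {ι : Type*} (s : Finset ι) (F : ι → WittAlg n) (a : LaurentAlg n) :
    (∑ i ∈ s, F i) a = ∑ i ∈ s, F i a := by
  classical
  induction s using Finset.induction_on with
  | empty => simp
  | insert _ _ hne ih =>
      rw [Finset.sum_insert hne, Finset.sum_insert hne, Derivation.add_apply, ih]

lemma wd_decomp (u : Fin n → ℂ) (γ : Fin n → ℤ) :
    wd u γ = ∑ i, u i • wd (Pi.single i 1) γ := by
  apply deriv_ext
  intro β c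
  rw [wd_single]
  rw [deriv_sum_apply]
  simp only [Derivation.smul_apply]
  simp only [wd_single, dotp_single_left, smul_smul]
  rw [← Finset.sum_smul]
  congr 1

lemma bracket_wd (u v : Fin n → ℂ) (β γ : Fin n → ℤ) :
    ⁅wd u β, wd v γ⁆ = wd (dotp u γ • v - dotp v β • u) (β + γ) := by
  apply deriv_ext
  intro δ c
  rw [Derivation.commutator_apply, wd_single, Derivation.map_smul, wd_single, wd_single,
    Derivation.map_smul, wd_single, wd_single]
  rw [show γ + (β + δ) = β + (γ + δ) by abel, show β + γ + δ = β + (γ + δ) by abel]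
  rw [smul_smul, smul_smul, ← sub_smul]
  congr 1
  rw [dotp_sub_left, dotp_smul_left, dotp_smul_left, dotp_add, dotp_add]
  ring

end WittAux

namespace WittAux

open AddMonoidAlgebra

variable {n : ℕ}

/-- The coefficient of `t^β dᵢ` in a derivation. -/
def coef (D : WittAlg n) (β : Fin n → ℤ) : Fin n → ℂ :=
  fun i => (D (AddMonoidAlgebra.single (ee i) 1)).coeff (β + ee i)

lemma coef_add (D₁ D₂ : WittAlg n) (β : Fin n → ℤ) :
    coef (D₁ + D₂) β = coef D₁ β + coef D₂ β := by
  funext i; simp only [coef]; rw [Derivation.add_apply]; rfl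

lemma coef_sub (D₁ D₂ : WittAlg n) (β : Fin n → ℤ) :
    coef (D₁ - D₂) β = coef D₁ β - coef D₂ β := by
  funext i; simp only [coef]; rw [Derivation.sub_apply]; rfl

lemma coef_smul (c : ℂ) (D : WittAlg n) (β : Fin n → ℤ) :
    coef (c • D) β = c • coef D β := by
  funext i; simp only [coef]; rw [Derivation.smul_apply]; rfl

lemma coef_zero (β : Fin n → ℤ) : coef (0 : WittAlg n) β = 0 := by
  funext i; simp [coef]

lemma coef_sum {ι : Type*} (s : Finset ι) (F : ι → WittAlg n) (β : Fin n → ℤ) :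
    coef (∑ j ∈ s, F j) β = ∑ j ∈ s, coef (F j) β := by
  classical
  induction s using Finset.induction_on with
  | empty => simp [coef_zero]
  | insert _ _ hne ih => rw [Finset.sum_insert hne, Finset.sum_insert hne, coef_add, ih]

lemma coef_wd (u : Fin n → ℂ) (γ β : Fin n → ℤ) :
    coef (wd u γ) β = if β = γ then u else 0 := by
  classical
  funext i
  rw [coef, wd_single, dotp_single_one]
  rw [AddMonoidAlgebra.coeff_smul_apply, AddMonoidAlgebra.coeff_single, Finsupp.single_apply]
  by_cases h : β = γ
  · subst h; simp
  · have hne : γ + ee i ≠ β + ee i := fun hh => h (by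
      have := add_right_cancel hh; exact this.symm)
    simp [hne, h]

/-- Two derivations of the Laurent algebra agreeing on the generators agree. -/
lemma deriv_eq_of_gens {D₁ D₂ : WittAlg n}
    (h : ∀ j, D₁ (AddMonoidAlgebra.single (ee j) 1) = D₂ (AddMonoidAlgebra.single (ee j) 1)) :
    D₁ = D₂ := by
  classical
  have key : ∀ γ : Fin n → ℤ, D₁ (AddMonoidAlgebra.single γ 1) = D₂ (AddMonoidAlgebra.single γ 1) := by
    -- P γ for the difference derivation
    set D := D₁ - D₂ with hD
    have hzero : ∀ j, D (AddMonoidAlgebra.single (ee j) 1) = 0 := by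
      intro j; rw [hD, Derivation.sub_apply, h j, sub_self]
    suffices hP : ∀ γ : Fin n → ℤ, D (AddMonoidAlgebra.single γ 1) = 0 by
      intro γ
      have := hP γ
      rw [hD, Derivation.sub_apply, sub_eq_zero] at this
      exact this
    have P0 : D (AddMonoidAlgebra.single (0 : Fin n → ℤ) (1:ℂ)) = 0 := by
      have : (AddMonoidAlgebra.single (0 : Fin n → ℤ) (1:ℂ)) = (1 : LaurentAlg n) := rfl
      rw [this, Derivation.map_one_eq_zero]
    have Padd : ∀ γ δ : Fin n → ℤ, D (AddMonoidAlgebra.single γ 1) = 0 →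
        D (AddMonoidAlgebra.single δ 1) = 0 → D (AddMonoidAlgebra.single (γ + δ) 1) = 0 := by
      intro γ δ hγ hδ
      have : (AddMonoidAlgebra.single (γ + δ) (1:ℂ))
          = AddMonoidAlgebra.single γ 1 * AddMonoidAlgebra.single δ 1 := by
        rw [AddMonoidAlgebra.single_mul_single, one_mul]
      rw [this, Derivation.leibniz, hγ, hδ, smul_zero, smul_zero, add_zero]
    have Pneg : ∀ γ : Fin n → ℤ, D (AddMonoidAlgebra.single γ 1) = 0 →
        D (AddMonoidAlgebra.single (-γ) 1) = 0 := by
      intro γ hγ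
      have h1 : (1 : LaurentAlg n) = AddMonoidAlgebra.single γ 1 * AddMonoidAlgebra.single (-γ) 1 := by
        rw [AddMonoidAlgebra.single_mul_single, one_mul, add_neg_cancel]; rfl
      have h2 : (0 : LaurentAlg n) = AddMonoidAlgebra.single γ (1:ℂ) • D (AddMonoidAlgebra.single (-γ) 1) := by
        have := Derivation.map_one_eq_zero (D := D)
        rw [h1, Derivation.leibniz, hγ, smul_zero, add_zero] at this
        exact this.symm
      have h3 := congrArg (fun x => AddMonoidAlgebra.single (-γ) (1:ℂ) • x) h2
      simp only [smul_zero, smul_smul] at h3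
      rw [AddMonoidAlgebra.single_mul_single, one_mul, neg_add_cancel] at h3
      have h4 : (AddMonoidAlgebra.single (0 : Fin n → ℤ) (1:ℂ)) = (1 : LaurentAlg n) := rfl
      rw [h4, one_smul] at h3
      exact h3.symm
    -- induction on the ℓ¹ norm
    intro γ
    have main : ∀ m : ℕ, ∀ γ : Fin n → ℤ, (∑ j, (γ j).natAbs) = m →
        D (AddMonoidAlgebra.single γ 1) = 0 := by
      intro m
      induction m using Nat.strong_induction_on with
      | _ m ih =>
        intro γ hm
        by_cases h0 : γ = 0
        · subst h0; exact P0
        · have : ∃ j, γ j ≠ 0 := by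
            by_contra hc
            push_neg at hc
            exact h0 (funext hc)
          obtain ⟨j, hj⟩ := this
          have hsum : (∑ k, (γ k).natAbs) = (γ j).natAbs + ∑ k ∈ Finset.univ.erase j, (γ k).natAbs :=
            (Finset.add_sum_erase _ _ (Finset.mem_univ j)).symm
          rcases lt_or_gt_of_ne hj with hneg | hpos
          · -- γ j < 0
            set γ' := Function.update γ j (γ j + 1) with hγ'
            have hsum' : (∑ k, (γ' k).natAbs) = (γ j + 1).natAbs + ∑ k ∈ Finset.univ.erase j, (γ k).natAbs := by
              rw [hγ', ← Finset.add_sum_erase _ (fun k => ((Function.update γ j (γ j + 1)) k).natAbs) (Finset.mem_univ j)]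
              congr 1
              · simp [Function.update_apply]
              · refine Finset.sum_congr rfl fun k hk => ?_
                rw [Function.update_apply, if_neg (Finset.ne_of_mem_erase hk)]
            have hlt : (∑ k, (γ' k).natAbs) < m := by
              rw [← hm, hsum, hsum']
              have : (γ j + 1).natAbs < (γ j).natAbs := by omega
              omega
            have hγ'0 := ih _ hlt γ' rfl
            have hdec : γ = γ' + (-(ee j)) := by
              funext k
              by_cases hk : k = j
              · subst hk
                simp [hγ', Function.update_apply, ee, Pi.single_apply]
              · simp [hγ', Function.update_apply, hk, ee, Pi.single_apply]
            rw [hdec]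
            exact Padd _ _ hγ'0 (Pneg _ (hzero j))
          · -- γ j > 0
            set γ' := Function.update γ j (γ j - 1) with hγ'
            have hsum' : (∑ k, (γ' k).natAbs) = (γ j - 1).natAbs + ∑ k ∈ Finset.univ.erase j, (γ k).natAbs := by
              rw [hγ', ← Finset.add_sum_erase _ (fun k => ((Function.update γ j (γ j - 1)) k).natAbs) (Finset.mem_univ j)]
              congr 1
              · simp [Function.update_apply]
              · refine Finset.sum_congr rfl fun k hk => ?_
                rw [Function.update_apply, if_neg (Finset.ne_of_mem_erase hk)]
            have hlt : (∑ k, (γ' k).natAbs) < m := by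
              rw [← hm, hsum, hsum']
              have : (γ j - 1).natAbs < (γ j).natAbs := by omega
              omega
            have hγ'0 := ih _ hlt γ' rfl
            have hdec : γ = γ' + ee j := by
              funext k
              by_cases hk : k = j
              · subst hk
                simp [hγ', Function.update_apply, ee, Pi.single_apply]
              · simp [hγ', Function.update_apply, hk, ee, Pi.single_apply]
            rw [hdec]
            exact Padd _ _ hγ'0 (hzero j)
    exact main _ γ rfl
  apply deriv_ext
  intro β c
  have h1 : (AddMonoidAlgebra.single β c) = c • AddMonoidAlgebra.single β (1:ℂ) := by
    rw [AddMonoidAlgebra.smul_single', mul_one]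
  rw [h1, Derivation.map_smul, Derivation.map_smul, key]

/-- Finite support of coefficients. -/
lemma coef_finite (D : WittAlg n) :
    ∃ s : Finset (Fin n → ℤ), ∀ δ ∉ s, coef D δ = 0 := by
  classical
  refine ⟨Finset.univ.biUnion (fun j => (D (AddMonoidAlgebra.single (ee j) 1)).coeff.support.image
    (fun ρ => ρ - ee j)), fun δ hδ => ?_⟩
  funext i
  by_contra hne
  apply hδ
  rw [Finset.mem_biUnion]
  refine ⟨i, Finset.mem_univ i, ?_⟩
  rw [Finset.mem_image]
  exact ⟨δ + ee i, Finsupp.mem_support_iff.mpr hne, by abel⟩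

/-- Every derivation is a finite sum of the basis derivations `t^δ dᵢ`. -/
lemma deriv_repr (D : WittAlg n) (s : Finset (Fin n → ℤ)) (hs : ∀ δ ∉ s, coef D δ = 0) :
    D = ∑ δ ∈ s, wd (coef D δ) δ := by
  classical
  apply deriv_eq_of_gens
  intro j
  rw [deriv_sum_apply]
  simp only [wd_single, dotp_single_one]
  ext ρ
  rw [AddMonoidAlgebra.coeff_sum, Finsupp.finset_sum_apply]
  have heach : ∀ δ ∈ s, (coef D δ j • AddMonoidAlgebra.single (δ + ee j) (1:ℂ)).coeff ρ
      = if δ = ρ - ee j then coef D δ j else 0 := by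
    intro δ _
    rw [AddMonoidAlgebra.coeff_smul_apply, AddMonoidAlgebra.coeff_single, Finsupp.single_apply]
    by_cases h : δ = ρ - ee j
    · rw [if_pos h, if_pos (by rw [h]; abel), smul_eq_mul, mul_one]
    · rw [if_neg h, if_neg (fun hh => h (by rw [← hh]; abel)), smul_eq_mul, mul_zero]
  rw [Finset.sum_congr rfl heach]
  rw [Finset.sum_ite_eq' s (ρ - ee j) (fun δ => coef D δ j)]
  by_cases hmem : ρ - ee j ∈ s
  · rw [if_pos hmem]
    show _ = coef D (ρ - ee j) j
    rw [coef]
    congr 1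
    abel
  · rw [if_neg hmem]
    have := hs _ hmem
    have h2 : coef D (ρ - ee j) j = 0 := by rw [this]; rfl
    rw [coef] at h2
    have h3 : ρ - ee j + ee j = ρ := by abel
    rw [h3] at h2
    exact h2

lemma eq_zero_of_coef (D : WittAlg n) (h : ∀ δ, coef D δ = 0) : D = 0 := by
  have := deriv_repr D ∅ (fun δ _ => h δ)
  simpa using this

lemma deriv_eq_of_coef {D₁ D₂ : WittAlg n} (h : ∀ δ, coef D₁ δ = coef D₂ δ) : D₁ = D₂ := by
  have : D₁ - D₂ = 0 := eq_zero_of_coef _ (fun δ => by rw [coef_sub, h, sub_self])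
  rwa [sub_eq_zero] at this

lemma deriv_map_sum {ι : Type*} (s : Finset ι) (D : WittAlg n) (f : ι → LaurentAlg n) :
    D (∑ i ∈ s, f i) = ∑ i ∈ s, D (f i) := by
  classical
  induction s using Finset.induction_on with
  | empty => simp
  | insert _ _ hne ih => rw [Finset.sum_insert hne, map_add, ih, Finset.sum_insert hne]

lemma sum_lie' {ι : Type*} (s : Finset ι) (F : ι → WittAlg n) (x : WittAlg n) :
    ⁅∑ i ∈ s, F i, x⁆ = ∑ i ∈ s, ⁅F i, x⁆ := by
  classical
  apply Derivation.ext
  intro a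
  rw [Derivation.commutator_apply, deriv_sum_apply, deriv_sum_apply, deriv_map_sum,
    deriv_sum_apply]
  rw [← Finset.sum_sub_distrib]
  refine Finset.sum_congr rfl fun i _ => ?_
  rw [Derivation.commutator_apply]

/-- Coefficients of a bracket with a basis-type derivation. -/
lemma coef_bracket (W : WittAlg n) (v : Fin n → ℂ) (β δ : Fin n → ℤ) :
    coef ⁅W, wd v β⁆ δ
      = dotp (coef W (δ - β)) β • v - dotp v (δ - β) • coef W (δ - β) := by
  classical
  obtain ⟨s, hs⟩ := coef_finite W
  conv_lhs => rw [deriv_repr W s hs]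
  rw [sum_lie', coef_sum]
  have heach : ∀ γ ∈ s, coef ⁅wd (coef W γ) γ, wd v β⁆ δ
      = if γ = δ - β then (dotp (coef W γ) β • v - dotp v γ • coef W γ) else 0 := by
    intro γ _
    rw [bracket_wd, coef_wd]
    by_cases hcc : δ = γ + β
    · rw [if_pos hcc, if_pos (by rw [hcc]; abel)]
    · rw [if_neg hcc, if_neg (fun hh => hcc (by rw [hh]; abel))]
  rw [Finset.sum_congr rfl heach, Finset.sum_ite_eq' s (δ - β)
    (fun γ => dotp (coef W γ) β • v - dotp v γ • coef W γ)]
  by_cases hmem : δ - β ∈ s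
  · rw [if_pos hmem]
  · rw [if_neg hmem, hs _ hmem]
    simp [dotp_zero_left]

end WittAux

set_option maxHeartbeats 1000000

namespace WittAux

open AddMonoidAlgebra

variable {n : ℕ}

lemma wd_smul_left (a : ℂ) (v : Fin n → ℂ) (β : Fin n → ℤ) :
    wd (a • v) β = a • wd v β := by
  apply deriv_ext
  intro δ c
  rw [wd_single, Derivation.smul_apply, wd_single, dotp_smul_left, smul_smul]

lemma coef_neg (E : WittAlg n) (δ : Fin n → ℤ) : coef (-E) δ = -coef E δ := by
  have h : (0 : WittAlg n) - E = -E := by abel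
  rw [← h, coef_sub, coef_zero, zero_sub]

lemma coef_lie_d (μ : Fin n → ℂ) (E : WittAlg n) (δ : Fin n → ℤ) :
    coef ⁅wd μ 0, E⁆ δ = dotp μ δ • coef E δ := by
  rw [← lie_skew, coef_neg, coef_bracket]
  rw [sub_zero, dotp_zero, zero_smul, zero_sub, neg_neg]

/-- The key structure lemma: any Lie algebra derivation of `Wₙ`, evaluated at
`d_μ + c t^α d_μ`, gives an element of `ℂ t^α 𝔥 + [Wₙ, d_μ + c t^α d_μ]`. -/
lemma lie_deriv_structure (hn : 0 < n) (μ : Fin n → ℂ) (hμ : IsGeneric μ) (α : Fin n → ℤ)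
    (D : LieDerivation ℂ (WittAlg n) (WittAlg n)) (c : ℂ) :
    ∃ (ζ : Fin n → ℂ) (W : WittAlg n),
      D (wd μ 0 + c • wd μ α) = c • wd ζ α + ⁅W, wd μ 0 + c • wd μ α⁆ := by
  classical
  set f : (Fin n → ℤ) → (Fin n → ℂ) := fun γ => coef (D (wd μ 0)) γ with hf
  -- the fundamental coefficient identity
  have spade : ∀ (γ β : Fin n → ℤ) (v : Fin n → ℂ),
      -(dotp μ γ) • coef (D (wd v β)) (β + γ) = dotp (f γ) β • v - dotp v γ • f γ := by
    intro γ β v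
    have hbr : ⁅wd μ 0, wd v β⁆ = dotp μ β • wd v β := by
      rw [bracket_wd, dotp_zero, zero_smul, sub_zero, wd_smul_left, zero_add]
    have hD := LieDerivation.apply_lie_eq_add D (wd μ 0) (wd v β)
    rw [hbr, map_smul] at hD
    -- hD : dotp μ β • D (wd v β) = ⁅wd μ 0, D (wd v β)⁆ + ⁅D (wd μ 0), wd v β⁆
    have hco := congrArg (fun E => coef E (β + γ)) hD
    rw [coef_smul, coef_add, coef_lie_d, coef_bracket] at hco
    rw [add_sub_cancel_left, dotp_add] at hco
    have hkey : -(dotp μ γ) • coef (D (wd v β)) (β + γ)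
        = dotp μ β • coef (D (wd v β)) (β + γ)
          - (dotp μ β + dotp μ γ) • coef (D (wd v β)) (β + γ) := by
      rw [add_smul, neg_smul]; abel
    rw [hkey, hco]
    abel
  -- the degree-zero coefficient of D(d_μ) vanishes
  have hf0 : f 0 = 0 := by
    have key : ∀ β : Fin n → ℤ, dotp (f 0) β = 0 := by
      intro β
      have h := spade 0 β (fun _ => (1:ℂ))
      rw [dotp_zero, neg_zero, zero_smul, dotp_zero, zero_smul, sub_zero] at h
      have := congrArg (fun w => w ⟨0, hn⟩) h.symm
      simpa using this
    exact eq_zero_of_forall_dotp _ key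
  set g : (Fin n → ℤ) → (Fin n → ℂ) := fun γ => (-(dotp μ γ)⁻¹) • f γ with hg
  -- coefficient formula for D(x̂) away from degree α
  have spadex : ∀ γ : Fin n → ℤ, γ ≠ 0 →
      coef (D (wd μ α)) (γ + α) = dotp (g γ) α • μ - dotp μ γ • g γ := by
    intro γ hγ
    have hne := hμ γ hγ
    have h := spade γ α μ
    rw [show α + γ = γ + α by abel] at h
    have h2 := congrArg (fun w => (-(dotp μ γ)⁻¹) • w) h
    rw [smul_smul, neg_mul_neg, inv_mul_cancel₀ hne, one_smul] at h2
    rw [h2]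
    simp only [hg, dotp_smul_left]
    funext i
    simp only [Pi.smul_apply, Pi.sub_apply, smul_eq_mul]
    field_simp
    ring
  obtain ⟨s₁, hs₁⟩ := coef_finite (D (wd μ 0))
  obtain ⟨s₂, hs₂⟩ := coef_finite (D (wd μ α))
  set T : Finset (Fin n → ℤ) := (s₁ ∪ s₂.image (fun δ => δ - α)).erase 0 with hT
  have hT0 : (0 : Fin n → ℤ) ∉ T := Finset.notMem_erase _ _
  have hTmem : ∀ γ ∈ T, γ ≠ 0 := fun γ hγ => Finset.ne_of_mem_erase hγ
  set ζ : Fin n → ℂ := coef (D (wd μ α)) α with hζ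
  refine ⟨ζ, ∑ γ ∈ T, wd (g γ) γ, ?_⟩
  -- Claim 1 : D d̂ = ∑ ⁅w_γ, d̂⁆
  have claim1 : D (wd μ 0) = ∑ γ ∈ T, ⁅wd (g γ) γ, wd μ 0⁆ := by
    apply deriv_eq_of_coef
    intro δ
    rw [coef_sum]
    have heach : ∀ γ ∈ T, coef ⁅wd (g γ) γ, wd μ 0⁆ δ
        = if γ = δ then (- dotp μ γ) • g γ else 0 := by
      intro γ _
      rw [bracket_wd, coef_wd, add_zero, dotp_zero, zero_smul, zero_sub]
      by_cases h : γ = δ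
      · rw [if_pos h.symm, if_pos h, neg_smul]
      · rw [if_neg (fun hh => h hh.symm), if_neg h]
    rw [Finset.sum_congr rfl heach, Finset.sum_ite_eq' T δ (fun γ => (- dotp μ γ) • g γ)]
    by_cases hmem : δ ∈ T
    · rw [if_pos hmem]
      have hne := hμ δ (hTmem δ hmem)
      simp only [hg]
      funext i
      simp only [Pi.smul_apply, smul_eq_mul]
      field_simp
      rfl
    · rw [if_neg hmem]
      by_cases hδ0 : δ = 0
      · rw [hδ0]; exact hf0
      · have : δ ∉ s₁ := by
          intro hin
          exact hmem (Finset.mem_erase.mpr ⟨hδ0, Finset.mem_union_left _ hin⟩)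
        exact hs₁ δ this
  -- Claim 2 : D x̂ = wd ζ α + ∑ ⁅w_γ, x̂⁆
  have claim2 : D (wd μ α) = wd ζ α + ∑ γ ∈ T, ⁅wd (g γ) γ, wd μ α⁆ := by
    rw [hζ]
    apply deriv_eq_of_coef
    intro δ
    rw [coef_add, coef_sum, coef_wd]
    have heach : ∀ γ ∈ T, coef ⁅wd (g γ) γ, wd μ α⁆ δ
        = if γ = δ - α then (dotp (g γ) α • μ - dotp μ γ • g γ) else 0 := by
      intro γ _
      rw [bracket_wd, coef_wd]
      by_cases h : γ = δ - α
      · rw [if_pos (by rw [h]; abel), if_pos h]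
      · rw [if_neg (fun hh => h (by rw [hh]; abel)), if_neg h]
    rw [Finset.sum_congr rfl heach,
      Finset.sum_ite_eq' T (δ - α) (fun γ => dotp (g γ) α • μ - dotp μ γ • g γ)]
    by_cases hδα : δ = α
    · subst hδα
      rw [if_pos rfl, if_neg (by rw [sub_self]; exact hT0), add_zero]
    · rw [if_neg hδα]
      by_cases hmem : δ - α ∈ T
      · rw [if_pos hmem, ← spadex (δ - α) (hTmem _ hmem), zero_add, sub_add_cancel]
      · rw [if_neg hmem, zero_add]
        by_cases hδα0 : δ - α = 0
        · exact absurd (by rw [← sub_eq_zero]; exact hδα0) hδα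
        · have : δ ∉ s₂ := by
            intro hin
            refine hmem (Finset.mem_erase.mpr ⟨hδα0, Finset.mem_union_right _ ?_⟩)
            exact Finset.mem_image.mpr ⟨δ, hin, rfl⟩
          exact hs₂ δ this
  -- assemble
  have hexp : ⁅∑ γ ∈ T, wd (g γ) γ, wd μ 0 + c • wd μ α⁆
      = ∑ γ ∈ T, ⁅wd (g γ) γ, wd μ 0⁆ + c • ∑ γ ∈ T, ⁅wd (g γ) γ, wd μ α⁆ := by
    rw [lie_add (∑ γ ∈ T, wd (g γ) γ) (wd μ 0) (c • wd μ α),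
      lie_smul c (∑ γ ∈ T, wd (g γ) γ) (wd μ α), sum_lie', sum_lie']
  rw [map_add, map_smul, claim1, claim2, hexp, smul_add]
  abel

end WittAux

namespace WittAux

/-- Polynomial coefficients of the canonical solution of the recursion. -/
def Hseq {n : ℕ} (lam : ℤ → ℂ) (bs : ℤ → ((Fin n → ℂ) →ₗ[ℂ] (Fin n → ℂ)))
    (X : ℤ → (Fin n → ℂ)) : ℕ → ℤ → (Fin n → ℂ)
  | 0, _ => 0
  | (m+1), k => (lam k)⁻¹ • (bs (k-1) (Hseq lam bs X m (k-1)) - if m = 0 then X k else 0)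

/-- Composition `bs (k-1) ∘ bs (k-2) ∘ ⋯ ∘ bs (k-m)`. -/
def compseq {n : ℕ} (bs : ℤ → ((Fin n → ℂ) →ₗ[ℂ] (Fin n → ℂ))) :
    ℕ → ℤ → ((Fin n → ℂ) →ₗ[ℂ] (Fin n → ℂ))
  | 0, _ => LinearMap.id
  | (m+1), k => (bs (k-1)).comp (compseq bs m (k-1))

lemma compseq_injective {n : ℕ} (bs : ℤ → ((Fin n → ℂ) →ₗ[ℂ] (Fin n → ℂ))) :
    ∀ (m : ℕ) (k : ℤ), (∀ j : ℤ, k - m ≤ j → j ≤ k - 1 → Function.Injective (bs j)) →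
      Function.Injective (compseq bs m k) := by
  intro m
  induction m with
  | zero => intro k _; exact fun a b h => h
  | succ m ih =>
      intro k hk
      show Function.Injective ((bs (k-1)).comp (compseq bs m (k-1)))
      rw [LinearMap.coe_comp]
      refine Function.Injective.comp (hk (k-1) (by omega) (by omega)) (ih (k-1) ?_)
      intro j h1 h2
      exact hk j (by omega) (by omega)

lemma Hseq_closed {n : ℕ} (lam : ℤ → ℂ) (bs : ℤ → ((Fin n → ℂ) →ₗ[ℂ] (Fin n → ℂ)))
    (X : ℤ → (Fin n → ℂ)) :
    ∀ (m : ℕ) (k : ℤ), (∀ j : ℤ, k - m ≤ j → j ≤ k → lam j ≠ 0) →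
      ∃ e : ℂ, e ≠ 0 ∧ Hseq lam bs X (m+1) k = e • compseq bs m k (X (k - m)) := by
  intro m
  induction m with
  | zero =>
      intro k hk
      refine ⟨-(lam k)⁻¹, ?_, ?_⟩
      · simp only [neg_ne_zero, ne_eq, inv_eq_zero]
        exact hk k (by omega) (by omega)
      · show (lam k)⁻¹ • (bs (k-1) (Hseq lam bs X 0 (k-1)) - if (0:ℕ) = 0 then X k else 0)
          = -(lam k)⁻¹ • (compseq bs 0 k) (X (k - (0:ℕ)))
        simp only [Hseq, map_zero, if_pos rfl, zero_sub, compseq, LinearMap.id_coe, id_eq,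
          Nat.cast_zero, sub_zero, smul_neg, neg_smul, ite_true]
  | succ m ih =>
      intro k hk
      obtain ⟨e, he, hcf⟩ := ih (k-1) (fun j h1 h2 => hk j (by
        push_cast at h1 ⊢
        omega) (by omega))
      refine ⟨(lam k)⁻¹ * e, ?_, ?_⟩
      · have : lam k ≠ 0 := hk k (by omega) (by omega)
        simp only [ne_eq, mul_eq_zero, inv_eq_zero, not_or]
        exact ⟨this, he⟩
      · show (lam k)⁻¹ • (bs (k-1) (Hseq lam bs X (m+1) (k-1)) - if m + 1 = 0 then X k else 0)
          = ((lam k)⁻¹ * e) • (bs (k-1)).comp (compseq bs m (k-1)) (X (k - (m+1:ℕ)))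
        rw [if_neg (Nat.succ_ne_zero m), sub_zero, hcf]
        rw [map_smul, smul_smul, LinearMap.coe_comp, Function.comp_apply,
          show k - ((m+1 : ℕ) : ℤ) = k - 1 - m by push_cast; omega]

/-- Auxiliary: a polynomial function of `c` vanishing away from `0` has zero coefficients. -/
lemma poly_vanish {M : ℕ} (u : ℕ → ℂ)
    (h : ∀ c : ℂ, c ≠ 0 → ∑ m ∈ Finset.range M, c ^ m * u m = 0) :
    ∀ m < M, u m = 0 := by
  classical
  set p : Polynomial ℂ := ∑ m ∈ Finset.range M, Polynomial.C (u m) * Polynomial.X ^ m with hp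
  have hroot : {c : ℂ | p.IsRoot c}.Infinite := by
    have h1 : ({0}ᶜ : Set ℂ).Infinite := Set.Finite.infinite_compl (Set.finite_singleton 0)
    refine h1.mono ?_
    intro c hc
    have hc0 : c ≠ 0 := hc
    show p.IsRoot c
    rw [Polynomial.IsRoot, hp, Polynomial.eval_finset_sum]
    simp only [Polynomial.eval_mul, Polynomial.eval_C, Polynomial.eval_pow, Polynomial.eval_X]
    rw [← h c hc0]
    exact Finset.sum_congr rfl fun m _ => by ring
  have hp0 : p = 0 := Polynomial.eq_zero_of_infinite_isRoot p hroot
  intro m hm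
  have hcoeff := congrArg (fun q => Polynomial.coeff q m) hp0
  simp only [Polynomial.coeff_zero] at hcoeff
  rw [hp, Polynomial.finset_sum_coeff] at hcoeff
  have heach : ∀ b ∈ Finset.range M, (Polynomial.C (u b) * Polynomial.X ^ b).coeff m
      = if b = m then u b else 0 := by
    intro b _
    rw [Polynomial.coeff_C_mul, Polynomial.coeff_X_pow]
    by_cases hbm : b = m
    · rw [if_pos hbm, if_pos hbm.symm, mul_one]
    · rw [if_neg hbm, if_neg (fun hh => hbm hh.symm), mul_zero]
  rw [Finset.sum_congr rfl heach, Finset.sum_ite_eq' (Finset.range M) m u] at hcoeff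
  rw [if_pos (Finset.mem_range.mpr hm)] at hcoeff
  exact hcoeff

lemma poly_vanish_vec {n M : ℕ} (u : ℕ → (Fin n → ℂ))
    (h : ∀ c : ℂ, c ≠ 0 → ∑ m ∈ Finset.range M, c ^ m • u m = 0) :
    ∀ m < M, u m = 0 := by
  intro m hm
  funext i
  refine poly_vanish (fun m' => u m' i) (fun c hc => ?_) m hm
  have := congrArg (fun w => w i) (h c hc)
  simpa [Finset.sum_apply, Pi.smul_apply, smul_eq_mul] using this

/-- The core recursion lemma. -/
lemma core_seq {n : ℕ} (lam : ℤ → ℂ) (bs : ℤ → ((Fin n → ℂ) →ₗ[ℂ] (Fin n → ℂ))) (K : ℤ)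
    (hlam : ∀ k < K, lam k ≠ 0) (hbs : ∀ k < K, Function.Injective (bs k))
    (X : ℤ → (Fin n → ℂ)) (N₀ : ℤ) (hX : ∀ k < N₀, X k = 0)
    (hmain : ∀ c : ℂ, c ≠ 0 → ∃ g : ℤ → (Fin n → ℂ),
      (∃ N' : ℤ, ∀ k < N', g k = 0) ∧
      (∀ k < K, lam k • g k = c • (bs (k-1) (g (k-1)) - X k)) ∧
      X K = bs (K-1) (g (K-1))) :
    ∀ k ≤ K, X k = 0 := by
  classical
  -- reduce to N ≤ K
  obtain ⟨N, hXN, hNK⟩ : ∃ N : ℤ, (∀ k < N, X k = 0) ∧ N ≤ K :=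
    ⟨min N₀ K, fun k hk => hX k (lt_of_lt_of_le hk (min_le_left _ _)), min_le_right _ _⟩
  obtain ⟨M₂, hM₂⟩ : ∃ M₂ : ℕ, (M₂ : ℤ) = K - N := ⟨(K - N).toNat, by omega⟩
  set M₁ : ℕ := M₂ + 1 with hM₁
  set M₀ : ℕ := M₁ + 1 with hM₀
  set H := Hseq lam bs X with hH
  -- vanishing of H below N
  have hH0 : ∀ k, H 0 k = 0 := fun _ => rfl
  have hHzero : ∀ (m : ℕ) (k : ℤ), k < K → k - m < N → H (m+1) k = 0 := by
    intro m k hkK hkN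
    obtain ⟨e, he, hcf⟩ := Hseq_closed lam bs X m k
      (fun j h1 h2 => hlam j (lt_of_le_of_lt h2 hkK))
    rw [hH, hcf, hXN (k - m) hkN, map_zero, smul_zero]
  -- the solution is unique and polynomial in c
  have huniq : ∀ c : ℂ, c ≠ 0 → ∀ g : ℤ → (Fin n → ℂ),
      (∃ N' : ℤ, ∀ k < N', g k = 0) →
      (∀ k < K, lam k • g k = c • (bs (k-1) (g (k-1)) - X k)) →
      ∀ k, k ≤ K - 1 → g k = ∑ m ∈ Finset.range M₀, c ^ m • H m k := by
    intro c hc g ⟨N', hgN'⟩ hrec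
    obtain ⟨b, hb1, hb2, hb3⟩ : ∃ b : ℤ, b < N ∧ b < N' ∧ b ≤ K - 1 := by
      refine ⟨min (min N N') K - 1, ?_, ?_, ?_⟩
      · have h1 := min_le_left (min N N') K
        have h2 := min_le_left N N'
        omega
      · have h1 := min_le_left (min N N') K
        have h2 := min_le_right N N'
        omega
      · have h1 := min_le_right (min N N') K
        omega
    have hz : ∀ (k : ℤ), k < N → k ≤ K - 1 → ∀ m ∈ Finset.range M₀, c ^ m • H m k = 0 := by
      intro k hkN hkK m _
      match m with
      | 0 => rw [hH0, smul_zero]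
      | (m+1) => rw [hHzero m k (by omega) (by omega), smul_zero]
    have hbase : g b = ∑ m ∈ Finset.range M₀, c ^ m • H m b := by
      rw [hgN' b hb2, Finset.sum_congr rfl (hz b hb1 hb3), Finset.sum_const_zero]
    have hstep : ∀ k : ℤ, b ≤ k →
        (k ≤ K - 1 → g k = ∑ m ∈ Finset.range M₀, c ^ m • H m k) →
        (k + 1 ≤ K - 1 → g (k+1) = ∑ m ∈ Finset.range M₀, c ^ m • H m (k+1)) := by
      intro k _ Sk hk1
      have hkK : k ≤ K - 1 := by omega
      have Skv := Sk hkK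
      have hlamne : lam (k+1) ≠ 0 := hlam (k+1) (by omega)
      have hrel := hrec (k+1) (by omega)
      rw [add_sub_cancel_right] at hrel
      have hterm : ∀ m ∈ Finset.range M₀, bs k (c ^ m • H m k) = c ^ m • bs k (H m k) :=
        fun m _ => map_smul _ _ _
      have htop : H M₁ k = 0 := by
        apply hHzero M₂ k (by omega)
        omega
      have hHrec : ∀ m : ℕ, H (m+1) (k+1)
          = (lam (k+1))⁻¹ • (bs k (H m k) - if m = 0 then X (k+1) else 0) := by
        intro m
        show Hseq lam bs X (m+1) (k+1) = _
        show (lam (k+1))⁻¹ • (bs ((k+1)-1) (Hseq lam bs X m ((k+1)-1))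
            - if m = 0 then X (k+1) else 0) = _
        rw [show (k:ℤ)+1 - 1 = k by omega]
      have hHsmul : ∀ m : ℕ, lam (k+1) • H (m+1) (k+1)
          = bs k (H m k) - if m = 0 then X (k+1) else 0 := by
        intro m
        rw [hHrec m, smul_inv_smul₀ hlamne]
      have hstep1 : lam (k+1) • ∑ m ∈ Finset.range M₀, c ^ m • H m (k+1)
          = ∑ m ∈ Finset.range M₁, c ^ (m+1) • (bs k (H m k) - if m = 0 then X (k+1) else 0) := by
        rw [Finset.smul_sum, hM₀, Finset.sum_range_succ']
        have hH0 : lam (k+1) • (c ^ 0 • H 0 (k+1)) = 0 := by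
          have h00 : H 0 (k+1) = (0 : Fin n → ℂ) := rfl
          rw [h00, smul_zero, smul_zero]
        rw [hH0, add_zero]
        refine Finset.sum_congr rfl fun m _ => ?_
        rw [smul_comm, hHsmul m]
      have hstep2 : ∑ m ∈ Finset.range M₁, c ^ (m+1) • (bs k (H m k) - if m = 0 then X (k+1) else 0)
          = (∑ m ∈ Finset.range M₁, c ^ (m+1) • bs k (H m k)) - c • X (k+1) := by
        rw [Finset.sum_congr rfl (fun m (_ : m ∈ Finset.range M₁) =>
          smul_sub (c ^ (m+1)) (bs k (H m k)) (if m = 0 then X (k+1) else 0)),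
          Finset.sum_sub_distrib]
        congr 1
        rw [Finset.sum_congr rfl (fun m (_ : m ∈ Finset.range M₁) => by
          rw [smul_ite, smul_zero])]
        rw [Finset.sum_ite_eq' (Finset.range M₁) 0 (fun m => c ^ (m+1) • X (k+1))]
        rw [if_pos (Finset.mem_range.mpr (by omega)), pow_one]
      have hstep3 : c • (bs k (g k) - X (k+1))
          = (∑ m ∈ Finset.range M₁, c ^ (m+1) • bs k (H m k)) - c • X (k+1) := by
        rw [Skv, map_sum, Finset.sum_congr rfl hterm, smul_sub]
        congr 1
        rw [Finset.smul_sum, hM₀, Finset.sum_range_succ, htop, map_zero, smul_zero, smul_zero,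
          add_zero]
        refine Finset.sum_congr rfl fun m _ => ?_
        rw [smul_smul, pow_succ, mul_comm (c ^ m) c]
      refine smul_right_injective (Fin n → ℂ) hlamne ?_
      show lam (k+1) • g (k+1) = lam (k+1) • ∑ m ∈ Finset.range M₀, c ^ m • H m (k+1)
      rw [hrel, hstep1, hstep2, hstep3]
    have hind := Int.le_induction
      (motive := fun k _ => k ≤ K - 1 → g k = ∑ m ∈ Finset.range M₀, c ^ m • H m k)
      (fun _ => hbase) (fun k' hk' ih h1 => hstep k' hk' ih h1)
    intro k hk
    by_cases hbk : b ≤ k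
    · exact hind k hbk hk
    · push_neg at hbk
      rw [hgN' k (by omega), Finset.sum_congr rfl (hz k (by omega) hk), Finset.sum_const_zero]
  -- anchor identity: polynomial in c equals X K
  have hanchor : ∀ c : ℂ, c ≠ 0 →
      X K = ∑ m ∈ Finset.range M₀, c ^ m • (bs (K-1) (H m (K-1))) := by
    intro c hc
    obtain ⟨g, hgfin, hrec, hanc⟩ := hmain c hc
    rw [hanc, huniq c hc g hgfin hrec (K-1) (le_refl _), map_sum]
    exact Finset.sum_congr rfl (fun m _ => (map_smul _ _ _))
  -- extract coefficients
  have hvan : ∀ m < M₀, (bs (K-1) (H m (K-1))) - (if m = 0 then X K else 0) = 0 := by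
    refine poly_vanish_vec _ (fun c hc => ?_)
    rw [Finset.sum_congr rfl (fun m (_ : m ∈ Finset.range M₀) =>
      smul_sub (c ^ m) (bs (K-1) (H m (K-1))) (if m = 0 then X K else 0)),
      Finset.sum_sub_distrib]
    rw [Finset.sum_congr rfl (fun m (_ : m ∈ Finset.range M₀) =>
      show c ^ m • (if m = 0 then X K else 0) = (if m = 0 then c ^ m • X K else 0) from by
        split <;> simp)]
    rw [Finset.sum_ite_eq' (Finset.range M₀) 0 (fun m => c ^ m • X K)]
    rw [if_pos (Finset.mem_range.mpr (by omega)), pow_zero, one_smul, ← hanchor c hc,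
      sub_self]
  have hXK : X K = 0 := by
    have h0 := hvan 0 (by omega)
    rw [if_pos rfl] at h0
    have hH0 : H 0 (K-1) = 0 := rfl
    rw [hH0, map_zero, zero_sub, neg_eq_zero] at h0
    exact h0
  -- kill the lower coefficients
  have hlow : ∀ m : ℕ, 1 ≤ m → m < M₀ → X (K - m) = 0 := by
    intro m hm1 hmM
    obtain ⟨m', rfl⟩ : ∃ m', m = m' + 1 := ⟨m - 1, by omega⟩
    have hv := hvan (m'+1) hmM
    rw [if_neg (Nat.succ_ne_zero m'), sub_zero] at hv
    obtain ⟨e, he, hcf⟩ := Hseq_closed lam bs X m' (K-1)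
      (fun j h1 h2 => hlam j (by omega))
    rw [hH] at hv
    rw [hcf, map_smul, smul_eq_zero] at hv
    rcases hv with hv | hv
    · exact absurd hv he
    · have hinj1 : Function.Injective (bs (K-1)) := hbs (K-1) (by omega)
      have hinj2 : Function.Injective (compseq bs m' (K-1)) :=
        compseq_injective bs m' (K-1) (fun j h1 h2 => hbs j (by omega))
      have h1 : compseq bs m' (K-1) (X (K - 1 - m')) = 0 := by
        apply hinj1
        rw [map_zero]; exact hv
      have h2 : X (K - 1 - m') = 0 := by
        apply hinj2
        rw [map_zero]; exact h1
      rw [show K - ((m' + 1 : ℕ) : ℤ) = K - 1 - m' by push_cast; omega]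
      exact h2
  -- conclude
  intro k hk
  rcases eq_or_lt_of_le hk with rfl | hlt
  · exact hXK
  · set m : ℕ := (K - k).toNat with hm
    have hkm : k = K - m := by rw [hm]; omega
    by_cases hmM : m < M₀
    · rw [hkm]
      exact hlow m (by omega) hmM
    · -- k is far below: X k = 0 by support bound
      apply hXN
      push_neg at hmM
      have hcast : (M₀ : ℤ) = K - N + 2 := by rw [hM₀]; push_cast; omega
      omega

end WittAux

namespace WittAux

variable {n : ℕ}

lemma wd_zero_left (β : Fin n → ℤ) : wd (0 : Fin n → ℂ) β = 0 := by
  apply deriv_ext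
  intro δ c
  rw [wd_single, dotp_zero_left, zero_smul, Derivation.zero_apply]

/-- The basic linear maps appearing in the recursion. -/
def bmap (μ : Fin n → ℂ) (α : Fin n → ℤ) (τ : ℂ) : (Fin n → ℂ) →ₗ[ℂ] (Fin n → ℂ) where
  toFun u := dotp u α • μ - τ • u
  map_add' u v := by
    rw [dotp_add_left, add_smul, smul_add]
    abel
  map_smul' a u := by
    simp only [dotp_smul_left, RingHom.id_apply, smul_sub, smul_smul, mul_comm]

lemma bmap_apply (μ : Fin n → ℂ) (α : Fin n → ℤ) (τ : ℂ) (u : Fin n → ℂ) :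
    bmap μ α τ u = dotp u α • μ - τ • u := rfl

lemma bmap_injective (μ : Fin n → ℂ) (α : Fin n → ℤ) (τ : ℂ)
    (hτ : τ ≠ 0) (hl2 : τ ≠ dotp μ α) : Function.Injective (bmap μ α τ) := by
  have key : ∀ w, bmap μ α τ w = 0 → w = 0 := by
    intro w hw
    rw [bmap_apply, sub_eq_zero] at hw
    have h1 := congrArg (fun z => dotp z α) hw
    simp only [dotp_smul_left] at h1
    have h2 : dotp w α * (dotp μ α - τ) = 0 := by
      linear_combination h1
    have h3 : dotp w α = 0 := by
      rcases mul_eq_zero.mp h2 with h | h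
      · exact h
      · exact absurd (by linear_combination h : dotp μ α = τ) (fun hh => hl2 hh.symm)
    have h4 : τ • w = 0 := by rw [← hw, h3, zero_smul]
    rcases smul_eq_zero.mp h4 with h | h
    · exact absurd h hτ
    · exact h
  intro u v h
  have : bmap μ α τ (u - v) = 0 := by rw [map_sub, h, sub_self]
  have := key _ this
  rwa [sub_eq_zero] at this

/-- Support bounds along an injectively embedded line. -/
lemma line_bounds (G : (Fin n → ℤ) → (Fin n → ℂ)) (s : Finset (Fin n → ℤ))
    (hs : ∀ γ ∉ s, G γ = 0) (e : ℤ → (Fin n → ℤ)) (he : Function.Injective e) :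
    ∃ N Ku : ℤ, (∀ k : ℤ, k < N → G (e k) = 0) ∧ (∀ k : ℤ, Ku ≤ k → G (e k) = 0) := by
  classical
  have hfin : {k : ℤ | G (e k) ≠ 0}.Finite := by
    refine Set.Finite.subset (Set.Finite.preimage he.injOn s.finite_toSet) ?_
    intro k hk
    show e k ∈ (s : Set (Fin n → ℤ))
    by_contra hmem
    exact hk (hs _ hmem)
  obtain ⟨b, hb⟩ := hfin.bddBelow
  obtain ⟨u, hu⟩ := hfin.bddAbove
  refine ⟨b, u + 1, fun k hk => ?_, fun k hk => ?_⟩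
  · by_contra hne
    exact absurd (hb hne) (by omega)
  · by_contra hne
    exact absurd (hu hne) (by omega)

lemma zsmul_line_injective {α : Fin n → ℤ} (hα : α ≠ 0) (δ₀ : Fin n → ℤ) :
    Function.Injective (fun k : ℤ => δ₀ + k • α) := by
  have : ∃ i, α i ≠ 0 := by
    by_contra hc
    push_neg at hc
    exact hα (funext hc)
  obtain ⟨i, hi⟩ := this
  intro k k' h
  have h2 := congrArg (fun β => β i) h
  simp only [Pi.add_apply, Pi.smul_apply, smul_eq_mul] at h2
  have : k * α i = k' * α i := by omega
  exact mul_right_cancel₀ hi this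

lemma zsmul_index (k : ℤ) (α : Fin n → ℤ) : k • α - α = (k - 1) • α := by
  rw [sub_smul, one_smul]

end WittAux

end

open WittAux

/-- If `Δ` is a local derivation on `Wₙ` with `Δ(d_μ) = 0` (`μ` generic),
then for every `α ∈ ℤⁿ \ {0}`, `Δ(t^α d_μ)` lies in the span of
`{t^{kα} dᵢ : k ∈ ℤ, k ≥ 1, i}`. -/
theorem local_derivation_supported_on_positive_ray (n : ℕ) (hn : 0 < n)
    (μ : Fin n → ℂ) (hμ : IsGeneric μ)
    (Δ : WittAlg n →ₗ[ℂ] WittAlg n) (hΔ : IsLocalDerivation Δ)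
    (h0 : Δ (wd μ 0) = 0) :
    ∀ α : Fin n → ℤ, α ≠ 0 →
      Δ (wd μ α) ∈ Submodule.span ℂ
        {x : WittAlg n | ∃ (k : ℤ), 1 ≤ k ∧ ∃ i : Fin n, x = wd (Pi.single i 1) (k • α)} := by
  classical
  intro α hα
  set X : WittAlg n := Δ (wd μ α) with hX
  have hinj' : ∀ k k' : ℤ, k • α = k' • α → k = k' := by
    intro a b h
    apply zsmul_line_injective hα 0
    simp only [zero_add]
    exact h
  -- the master coefficient identity coming from locality
  have hmaster : ∀ c : ℂ, c ≠ 0 → ∃ (ζ : Fin n → ℂ) (G : (Fin n → ℤ) → (Fin n → ℂ)),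
      (∃ s : Finset (Fin n → ℤ), ∀ γ ∉ s, G γ = 0) ∧ ∀ δ : Fin n → ℤ,
        c • coef X δ = c • (if δ = α then ζ else 0)
          + ((dotp (G δ) 0 • μ - dotp μ δ • G δ)
            + c • (dotp (G (δ - α)) α • μ - dotp μ (δ - α) • G (δ - α))) := by
    intro c hc
    obtain ⟨D, hD⟩ := hΔ (wd μ 0 + c • wd μ α)
    obtain ⟨ζ, W, hW⟩ := lie_deriv_structure hn μ hμ α D c
    have hval : c • X = c • wd ζ α + (⁅W, wd μ 0⁆ + c • ⁅W, wd μ α⁆) := by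
      have hbr : ⁅W, wd μ 0 + c • wd μ α⁆ = ⁅W, wd μ 0⁆ + c • ⁅W, wd μ α⁆ := by
        rw [lie_add W (wd μ 0) (c • wd μ α), lie_smul c W (wd μ α)]
      rw [hX, ← hbr, ← hW, ← hD, map_add, map_smul, h0, zero_add]
    obtain ⟨s, hs⟩ := coef_finite W
    refine ⟨ζ, coef W, ⟨s, hs⟩, fun δ => ?_⟩
    have h1 := congrArg (fun E => coef E δ) hval
    rw [coef_smul, coef_add, coef_smul, coef_add, coef_smul, coef_wd,
      coef_bracket, coef_bracket, sub_zero] at h1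
    exact h1
  -- vanishing of the coefficients of X off the positive ray
  have hvanish : ∀ δ : Fin n → ℤ, (¬ ∃ k : ℤ, 1 ≤ k ∧ δ = k • α) → coef X δ = 0 := by
    intro δ₀ hδ₀
    have hsX : ∃ sX : Finset (Fin n → ℤ), ∀ γ ∉ sX, coef X γ = 0 := coef_finite X
    obtain ⟨sX, hsX⟩ := hsX
    by_cases hline : ∃ k : ℤ, δ₀ = k • α
    · -- Case A : δ₀ = k₀ • α with k₀ ≤ 0
      obtain ⟨k₀, rfl⟩ := hline
      have hk₀ : k₀ ≤ 0 := by
        by_contra hpos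
        exact hδ₀ ⟨k₀, by omega, rfl⟩
      have hne0 : ∀ k : ℤ, k ≠ 0 → dotp μ (k • α) ≠ 0 := by
        intro k hk
        refine hμ (k • α) ?_
        intro hzz
        exact hk (hinj' k 0 (by simpa using hzz))
      have hneq : ∀ k : ℤ, k ≠ 1 → dotp μ (k • α) ≠ dotp μ α := by
        intro k hk heq
        have hz : dotp μ ((k-1) • α) = 0 := by
          rw [← zsmul_index, dotp_sub, heq, sub_self]
        refine hμ ((k-1) • α) ?_ hz
        intro hzz
        exact hk (by
          have := hinj' (k-1) 0 (by simpa using hzz)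
          omega)
      obtain ⟨N, Ku, hN, hKu⟩ := line_bounds (coef X) sX hsX (fun k => k • α)
        (fun a b h => hinj' a b h)
      have hcore := core_seq (fun k => dotp μ (k • α)) (fun j => bmap μ α (dotp μ (j • α))) 0
        (fun k hk => hne0 k (by omega))
        (fun k hk => bmap_injective μ α _ (hne0 k (by omega)) (hneq k (by omega)))
        (fun k => coef X (k • α)) N (fun k hk => hN k hk) ?_
      · exact hcore k₀ hk₀
      · intro c hc
        obtain ⟨ζ, G, ⟨s, hsG⟩, hEq⟩ := hmaster c hc
        obtain ⟨Ng, Kg, hNg, hKg⟩ := line_bounds G s hsG (fun k => k • α)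
          (fun a b h => hinj' a b h)
        refine ⟨fun k => G (k • α), ⟨Ng, fun k hk => hNg k hk⟩, fun k hk => ?_, ?_⟩
        · -- the recursion for k < 0
          have h := hEq (k • α)
          rw [if_neg (fun hh : k • α = α => by
              have := hinj' k 1 (by simpa using hh)
              omega), smul_zero, zero_add, zsmul_index, dotp_zero, zero_smul, zero_sub] at h
          show dotp μ (k • α) • G (k • α)
              = c • (bmap μ α (dotp μ ((k-1) • α)) (G ((k-1) • α)) - coef X (k • α))
          rw [bmap_apply, smul_sub, h]
          abel
        · -- the anchor at k = 0
          have h := hEq 0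
          rw [if_neg (fun hh : (0 : Fin n → ℤ) = α => hα hh.symm), smul_zero, zero_add,
            dotp_zero, dotp_zero, zero_smul, zero_smul, sub_zero, zero_add] at h
          show coef X ((0:ℤ) • α)
              = bmap μ α (dotp μ (((0:ℤ)-1) • α)) (G (((0:ℤ)-1) • α))
          have hidx : ((0:ℤ) - 1) • α = 0 - α := by
            rw [← zsmul_index, zero_smul]
          rw [bmap_apply, hidx, show ((0:ℤ) • α) = (0 : Fin n → ℤ) from zero_smul _ _]
          exact smul_right_injective (Fin n → ℂ) hc h
    · -- Case B : δ₀ off the line ℤα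
      have he : Function.Injective (fun k : ℤ => δ₀ + k • α) := zsmul_line_injective hα δ₀
      have hne00 : ∀ k : ℤ, δ₀ + k • α ≠ 0 := by
        intro k hz
        refine hline ⟨-k, ?_⟩
        rw [neg_smul]
        exact eq_neg_of_add_eq_zero_left hz
      have hneα : ∀ k : ℤ, δ₀ + k • α ≠ α := by
        intro k hz
        refine hline ⟨1 - k, ?_⟩
        rw [sub_smul, one_smul]
        exact eq_sub_of_add_eq hz
      have hlamB : ∀ k : ℤ, dotp μ (δ₀ + k • α) ≠ 0 := fun k => hμ _ (hne00 k)
      have hidx : ∀ k : ℤ, δ₀ + k • α - α = δ₀ + (k-1) • α := by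
        intro k
        rw [add_sub_assoc, zsmul_index]
      have hneqB : ∀ k : ℤ, dotp μ (δ₀ + k • α) ≠ dotp μ α := by
        intro k heq
        have hz : dotp μ (δ₀ + (k-1) • α) = 0 := by
          rw [← hidx, dotp_sub, heq, sub_self]
        exact hμ _ (hne00 (k-1)) hz
      have hbsB : ∀ k : ℤ, Function.Injective (bmap μ α (dotp μ (δ₀ + k • α))) :=
        fun k => bmap_injective μ α _ (hlamB k) (hneqB k)
      obtain ⟨N, Ku, hN, hKu⟩ := line_bounds (coef X) sX hsX (fun k => δ₀ + k • α) he
      set K : ℤ := max Ku 0 with hK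
      have hKX : ∀ k : ℤ, K ≤ k → coef X (δ₀ + k • α) = 0 := fun k hk => hKu k (by omega)
      have hcore := core_seq (fun k => dotp μ (δ₀ + k • α))
        (fun j => bmap μ α (dotp μ (δ₀ + j • α))) K
        (fun k _ => hlamB k) (fun k _ => hbsB k)
        (fun k => coef X (δ₀ + k • α)) N (fun k hk => hN k hk) ?_
      · have := hcore 0 (by omega)
        simpa using this
      · intro c hc
        obtain ⟨ζ, G, ⟨s, hsG⟩, hEq⟩ := hmaster c hc
        obtain ⟨Ng, Kg, hNg, hKg⟩ := line_bounds G s hsG (fun k => δ₀ + k • α) he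
        have hrelAll : ∀ k : ℤ, dotp μ (δ₀ + k • α) • G (δ₀ + k • α)
            = c • (bmap μ α (dotp μ (δ₀ + (k-1) • α)) (G (δ₀ + (k-1) • α))
              - coef X (δ₀ + k • α)) := by
          intro k
          have h := hEq (δ₀ + k • α)
          rw [if_neg (hneα k), smul_zero, zero_add, hidx, dotp_zero, zero_smul, zero_sub] at h
          rw [bmap_apply, smul_sub, h]
          abel
        have hdesc : ∀ j : ℕ, ∀ k : ℤ, K - 1 ≤ k → Kg - j ≤ k → G (δ₀ + k • α) = 0 := by
          intro j
          induction j with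
          | zero =>
              intro k h1 h2
              exact hKg k (by omega)
          | succ j ih =>
              intro k h1 h2
              by_cases hcase : Kg - j ≤ k
              · exact ih k h1 hcase
              · have hgk1 : G (δ₀ + (k+1) • α) = 0 := ih (k+1) (by omega) (by omega)
                have hXk1 : coef X (δ₀ + (k+1) • α) = 0 := hKX (k+1) (by omega)
                have h := hrelAll (k+1)
                rw [hgk1, hXk1, smul_zero, sub_zero, show (k:ℤ)+1-1 = k by omega] at h
                have h2' : bmap μ α (dotp μ (δ₀ + k • α)) (G (δ₀ + k • α)) = 0 := by
                  rcases smul_eq_zero.mp h.symm with hh | hh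
                  · exact absurd hh hc
                  · exact hh
                exact hbsB k (show bmap μ α (dotp μ (δ₀ + k • α)) (G (δ₀ + k • α))
                  = bmap μ α (dotp μ (δ₀ + k • α)) 0 from by rw [h2', map_zero])
        have hgdesc : ∀ k : ℤ, K - 1 ≤ k → G (δ₀ + k • α) = 0 := by
          intro k hk
          exact hdesc (Kg - k).toNat k hk (by omega)
        refine ⟨fun k => G (δ₀ + k • α), ⟨Ng, fun k hk => hNg k hk⟩,
          fun k _ => hrelAll k, ?_⟩
        show coef X (δ₀ + K • α)
            = bmap μ α (dotp μ (δ₀ + (K-1) • α)) (G (δ₀ + (K-1) • α))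
        rw [hKX K (le_refl K), hgdesc (K-1) (le_refl _), map_zero]
  -- conclusion : X lies in the span
  obtain ⟨s, hs⟩ := coef_finite X
  rw [deriv_repr X s hs]
  apply Submodule.sum_mem
  intro δ hδ
  by_cases hray : ∃ k : ℤ, 1 ≤ k ∧ δ = k • α
  · obtain ⟨k, hk1, rfl⟩ := hray
    rw [wd_decomp]
    apply Submodule.sum_mem
    intro i _
    apply Submodule.smul_mem
    apply Submodule.subset_span
    exact ⟨k, hk1, i, rfl⟩
  · rw [hvanish δ hray, wd_zero_left]
    exact Submodule.zero_mem _
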